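/- The map φ(x,y,z) = (x/(1+z), y/(1+z), z/(1+z)) restricts to a bijection from Ω∞ onto Ω∖{(0,0,1)}, whose inverse is given by (ξ,η,ζ) ↦ (ξ/(1−ζ), η/(1−ζ), ζ/(1−ζ)); moreover φ maps the interior Ω∞° bijectively onto the interior Ω° of Ω. -/

import Mathlib

noncomputable section

/-- The finite reference pyramid `Ω`. -/
def Pyr : Set (ℝ × ℝ × ℝ) :=
  {p | 0 ≤ p.1 ∧ 0 ≤ p.2.1 ∧ 0 ≤ p.2.2 ∧ p.1 ≤ 1 - p.2.2 ∧ p.2.1 ≤ 1 - p.2.2}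

/-- The interior `Ω°` of the finite pyramid. -/
def PyrInt : Set (ℝ × ℝ × ℝ) :=
  {p | 0 < p.1 ∧ 0 < p.2.1 ∧ 0 < p.2.2 ∧ p.1 < 1 - p.2.2 ∧ p.2.1 < 1 - p.2.2}

/-- The (finite part of the) infinite reference pyramid `Ω∞`. -/
def PyrInf : Set (ℝ × ℝ × ℝ) :=
  {p | 0 ≤ p.1 ∧ p.1 ≤ 1 ∧ 0 ≤ p.2.1 ∧ p.2.1 ≤ 1 ∧ 0 ≤ p.2.2}

/-- The interior `Ω∞° = (0,1) × (0,1) × (0,∞)`. -/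
def PyrInfInt : Set (ℝ × ℝ × ℝ) :=
  {p | 0 < p.1 ∧ p.1 < 1 ∧ 0 < p.2.1 ∧ p.2.1 < 1 ∧ 0 < p.2.2}

/-- The projective map `φ(x,y,z) = (x/(1+z), y/(1+z), z/(1+z))`. -/
def phi : ℝ × ℝ × ℝ → ℝ × ℝ × ℝ :=
  fun p => (p.1 / (1 + p.2.2), p.2.1 / (1 + p.2.2), p.2.2 / (1 + p.2.2))

/-- The candidate inverse `(ξ,η,ζ) ↦ (ξ/(1−ζ), η/(1−ζ), ζ/(1−ζ))`. -/
def psi : ℝ × ℝ × ℝ → ℝ × ℝ × ℝ :=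
  fun q => (q.1 / (1 - q.2.2), q.2.1 / (1 - q.2.2), q.2.2 / (1 - q.2.2))

lemma psi_phi {p : ℝ × ℝ × ℝ} (hz : 0 ≤ p.2.2) : psi (phi p) = p := by
  have h : (0:ℝ) < 1 + p.2.2 := by linarith
  obtain ⟨x, y, z⟩ := p
  simp only [phi, psi, Prod.mk.injEq]
  have h1 : 1 - z / (1 + z) = 1 / (1 + z) := by field_simp; ring
  rw [h1]
  refine ⟨?_, ?_, ?_⟩ <;> field_simp

lemma phi_psi {q : ℝ × ℝ × ℝ} (hz : q.2.2 < 1) : phi (psi q) = q := by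
  have h : (0:ℝ) < 1 - q.2.2 := by linarith
  obtain ⟨x, y, z⟩ := q
  simp only [phi, psi, Prod.mk.injEq]
  have h1 : 1 + z / (1 - z) = 1 / (1 - z) := by field_simp; ring
  rw [h1]
  refine ⟨?_, ?_, ?_⟩ <;> field_simp

lemma phi_mem {p : ℝ × ℝ × ℝ} (hp : p ∈ PyrInf) : phi p ∈ Pyr \ {((0:ℝ),(0:ℝ),(1:ℝ))} := by
  obtain ⟨x, y, z⟩ := p
  obtain ⟨h1, h2, h3, h4, h5⟩ := hp
  have h : (0:ℝ) < 1 + z := by linarith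
  have key : ∀ w : ℝ, 0 ≤ w → w ≤ 1 → w / (1 + z) ≤ 1 - z / (1 + z) := by
    intro w hw hw1
    rw [le_sub_iff_add_le, ← add_div, div_le_one h]
    linarith
  have hzlt : z / (1 + z) < 1 := by rw [div_lt_one h]; linarith
  constructor
  · exact ⟨div_nonneg h1 h.le, div_nonneg h3 h.le, div_nonneg h5 h.le,
      key x h1 h2, key y h3 h4⟩
  · simp only [Set.mem_singleton_iff, phi, Prod.mk.injEq, not_and]
    intro _ _
    exact fun hc => absurd hc (by linarith)

lemma apex_lt {q : ℝ × ℝ × ℝ} (hq : q ∈ Pyr \ {((0:ℝ),(0:ℝ),(1:ℝ))}) : q.2.2 < 1 := by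
  obtain ⟨⟨h1, h2, h3, h4, h5⟩, hne⟩ := hq
  rcases lt_or_eq_of_le (show q.2.2 ≤ 1 by linarith) with h | h
  · exact h
  · exfalso
    apply hne
    have hx : q.1 = 0 := le_antisymm (by linarith) h1
    have hy : q.2.1 = 0 := le_antisymm (by linarith) h2
    simp only [Set.mem_singleton_iff]
    exact Prod.ext hx (Prod.ext hy h)

lemma psi_mem {q : ℝ × ℝ × ℝ} (hq : q ∈ Pyr \ {((0:ℝ),(0:ℝ),(1:ℝ))}) : psi q ∈ PyrInf := by
  have hlt := apex_lt hq
  obtain ⟨⟨h1, h2, h3, h4, h5⟩, _⟩ := hq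
  have h : (0:ℝ) < 1 - q.2.2 := by linarith
  simp only [psi, PyrInf, Set.mem_setOf_eq]
  refine ⟨div_nonneg h1 h.le, ?_, div_nonneg h2 h.le, ?_, div_nonneg h3 h.le⟩
  · rw [div_le_one h]; linarith
  · rw [div_le_one h]; linarith

lemma phi_mem_int {p : ℝ × ℝ × ℝ} (hp : p ∈ PyrInfInt) : phi p ∈ PyrInt := by
  obtain ⟨x, y, z⟩ := p
  obtain ⟨h1, h2, h3, h4, h5⟩ := hp
  have h : (0:ℝ) < 1 + z := by linarith
  have key : ∀ w : ℝ, w < 1 → w / (1 + z) < 1 - z / (1 + z) := by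
    intro w hw1
    rw [lt_sub_iff_add_lt, ← add_div, div_lt_one h]
    linarith
  exact ⟨div_pos h1 h, div_pos h3 h, div_pos h5 h, key x h2, key y h4⟩

lemma psi_mem_int {q : ℝ × ℝ × ℝ} (hq : q ∈ PyrInt) : psi q ∈ PyrInfInt := by
  obtain ⟨h1, h2, h3, h4, h5⟩ := hq
  have h : (0:ℝ) < 1 - q.2.2 := by linarith
  simp only [psi, PyrInfInt, Set.mem_setOf_eq]
  refine ⟨div_pos h1 h, ?_, div_pos h2 h, ?_, div_pos h3 h⟩
  · rw [div_lt_one h]; linarith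
  · rw [div_lt_one h]; linarith

lemma int_sub {q : ℝ × ℝ × ℝ} (hq : q ∈ PyrInt) : q ∈ Pyr \ {((0:ℝ),(0:ℝ),(1:ℝ))} := by
  obtain ⟨h1, h2, h3, h4, h5⟩ := hq
  refine ⟨⟨h1.le, h2.le, h3.le, h4.le, h5.le⟩, ?_⟩
  simp only [Set.mem_singleton_iff]
  intro hc
  rw [hc] at h1
  exact lt_irrefl _ h1


theorem phi_bijOn :
    Set.BijOn phi PyrInf (Pyr \ {((0 : ℝ), (0 : ℝ), (1 : ℝ))}) ∧
    (∀ p ∈ PyrInf, psi (phi p) = p) ∧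
    (∀ q ∈ Pyr \ {((0 : ℝ), (0 : ℝ), (1 : ℝ))}, psi q ∈ PyrInf ∧ phi (psi q) = q) ∧
    Set.BijOn phi PyrInfInt PyrInt := by
  have hinv : ∀ p ∈ PyrInf, psi (phi p) = p := fun p hp => psi_phi hp.2.2.2.2
  refine ⟨⟨fun p hp => phi_mem hp, ?_, ?_⟩, hinv, ?_, ?_⟩
  · intro p hp p' hp' h
    rw [← hinv p hp, ← hinv p' hp', h]
  · intro q hq
    exact ⟨psi q, psi_mem hq, phi_psi (apex_lt hq)⟩
  · intro q hq
    exact ⟨psi_mem hq, phi_psi (apex_lt hq)⟩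
  · refine ⟨fun p hp => phi_mem_int hp, ?_, ?_⟩
    · intro p hp p' hp' h
      have hp1 : p ∈ PyrInf := ⟨hp.1.le, hp.2.1.le, hp.2.2.1.le, hp.2.2.2.1.le, hp.2.2.2.2.le⟩
      have hp2 : p' ∈ PyrInf := ⟨hp'.1.le, hp'.2.1.le, hp'.2.2.1.le, hp'.2.2.2.1.le, hp'.2.2.2.2.le⟩
      rw [← hinv p hp1, ← hinv p' hp2, h]
    · intro q hq
      exact ⟨psi q, psi_mem_int hq, phi_psi (apex_lt (int_sub hq))⟩


end
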